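/- With the setup of the masked stochastic gradient (mask probabilities p for A and q for b, uniform selection of the pair (I,J) among st partition pairs), the following identity holds for every fixed x ∈ ℝ^n: E[ ‖Â x / p² − b̂ / (pq)‖₂² ] = (1/p²)‖A x − b‖₂² + ((1−q)/(p² q))‖b‖₂² + ((1−p)/p³) x^T diag(A^T A) x. -/

import Mathlib

open Matrix BigOperators Finset Filter

noncomputable section

/-- Entrywise Bernoulli mask of a matrix. -/
def maskM {m n : ℕ} (δ : Fin m → Fin n → Bool) (A : Matrix (Fin m) (Fin n) ℝ) :
    Matrix (Fin m) (Fin n) ℝ := Matrix.of fun i j => if δ i j then A i j else 0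

/-- Entrywise Bernoulli mask of a vector. -/
def maskV {m : ℕ} (ε : Fin m → Bool) (b : Fin m → ℝ) : Fin m → ℝ :=
  fun i => if ε i then b i else 0

/-- Probability of a given mask realization: i.i.d. Bernoulli(p) entries. -/
def wM {m n : ℕ} (p : ℝ) (δ : Fin m → Fin n → Bool) : ℝ :=
  ∏ i, ∏ j, (if δ i j then p else 1 - p)

/-- Probability of a given vector-mask realization: i.i.d. Bernoulli(q) entries. -/
def wV {m : ℕ} (q : ℝ) (ε : Fin m → Bool) : ℝ :=
  ∏ i, (if ε i then q else 1 - q)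

/-- `dsel K = I_{:,K} (I_{:,K})ᵀ`, the 0/1 diagonal selection matrix of an index set. -/
def dsel {k : ℕ} (K : Finset (Fin k)) : Matrix (Fin k) (Fin k) ℝ :=
  Matrix.diagonal fun i => if i ∈ K then (1 : ℝ) else 0

/-- `diagPart M` keeps only the diagonal of the square matrix `M`. -/
def diagPart {k : ℕ} (M : Matrix (Fin k) (Fin k) ℝ) : Matrix (Fin k) (Fin k) ℝ :=
  Matrix.diagonal fun i => M i i

/-- Squared Euclidean norm. -/
def sqnorm {k : ℕ} (v : Fin k → ℝ) : ℝ := ∑ i, (v i) ^ 2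

/-- Squared Frobenius norm. -/
def frobSq {m n : ℕ} (A : Matrix (Fin m) (Fin n) ℝ) : ℝ := ∑ i, ∑ j, (A i j) ^ 2

/-- `P` is a partition of the index set into nonempty pairwise disjoint blocks. -/
def IsPartition {k s : ℕ} (P : Fin s → Finset (Fin k)) : Prop :=
  (∀ i : Fin k, ∃! a : Fin s, i ∈ P a) ∧ ∀ a : Fin s, (P a).Nonempty

set_option maxHeartbeats 1000000


lemma sum_prod_pi {ι κ : Type*} [Fintype ι] [DecidableEq ι] [Fintype κ]
    (f : ι → κ → ℝ) :
    ∑ ε : ι → κ, ∏ i, f i (ε i) = ∏ i, ∑ b, f i b := by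
  rw [Finset.prod_univ_sum, Fintype.piFinset_univ]

lemma exp_prod {ι κ : Type*} [Fintype ι] [DecidableEq ι] [Fintype κ]
    (w : κ → ℝ) (g : ι → κ → ℝ) :
    ∑ ε : ι → κ, (∏ i, w (ε i)) * ∏ i, g i (ε i) = ∏ i, ∑ b, w b * g i b := by
  have := sum_prod_pi (fun i b => w b * g i b)
  simpa [Finset.prod_mul_distrib] using this

lemma exp_single {ι κ : Type*} [Fintype ι] [DecidableEq ι] [Fintype κ]
    (w : κ → ℝ) (hw : ∑ b, w b = 1) (i₀ : ι) (h : κ → ℝ) :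
    ∑ ε : ι → κ, (∏ i, w (ε i)) * h (ε i₀) = ∑ b, w b * h b := by
  have key : ∀ ε : ι → κ, h (ε i₀) = ∏ i, (if i = i₀ then h (ε i) else 1) := by
    intro ε; simp
  calc ∑ ε : ι → κ, (∏ i, w (ε i)) * h (ε i₀)
      = ∑ ε : ι → κ, (∏ i, w (ε i)) * ∏ i, (if i = i₀ then h (ε i) else 1) :=
        Finset.sum_congr rfl fun ε _ => by rw [← key ε]
    _ = ∏ i, ∑ b, w b * (if i = i₀ then h b else 1) :=
        exp_prod w (fun i b => if i = i₀ then h b else 1)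
    _ = ∑ b, w b * h b := by
        rw [Finset.prod_eq_single i₀]
        · simp
        · intro i _ hi; simp [hi, hw]
        · simp

lemma exp_pair {ι κ : Type*} [Fintype ι] [DecidableEq ι] [Fintype κ]
    (w : κ → ℝ) (hw : ∑ b, w b = 1) {i₀ j₀ : ι} (hne : i₀ ≠ j₀) (h g : κ → ℝ) :
    ∑ ε : ι → κ, (∏ i, w (ε i)) * (h (ε i₀) * g (ε j₀)) =
      (∑ b, w b * h b) * (∑ b, w b * g b) := by
  have key : ∀ ε : ι → κ, h (ε i₀) * g (ε j₀)
      = ∏ i, (if i = i₀ then h (ε i) else if i = j₀ then g (ε i) else 1) := by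
    intro ε
    have hsub : ∏ i ∈ ({i₀, j₀} : Finset ι),
        (if i = i₀ then h (ε i) else if i = j₀ then g (ε i) else 1)
        = ∏ i, (if i = i₀ then h (ε i) else if i = j₀ then g (ε i) else 1) := by
      refine Finset.prod_subset (Finset.subset_univ _) ?_
      intro i _ hi
      simp only [Finset.mem_insert, Finset.mem_singleton, not_or] at hi
      simp [hi.1, hi.2]
    rw [← hsub, Finset.prod_pair hne]
    simp [hne, hne.symm]
  calc ∑ ε : ι → κ, (∏ i, w (ε i)) * (h (ε i₀) * g (ε j₀))
      = ∑ ε : ι → κ, (∏ i, w (ε i)) *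
          ∏ i, (if i = i₀ then h (ε i) else if i = j₀ then g (ε i) else 1) :=
        Finset.sum_congr rfl fun ε _ => by rw [← key ε]
    _ = ∏ i, ∑ b, w b * (if i = i₀ then h b else if i = j₀ then g b else 1) :=
        exp_prod w (fun i b => if i = i₀ then h b else if i = j₀ then g b else 1)
    _ = (∑ b, w b * h b) * (∑ b, w b * g b) := by
        have hsub : ∏ i ∈ ({i₀, j₀} : Finset ι),
            (∑ b, w b * (if i = i₀ then h b else if i = j₀ then g b else 1))
            = ∏ i, ∑ b, w b * (if i = i₀ then h b else if i = j₀ then g b else 1) := by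
          refine Finset.prod_subset (Finset.subset_univ _) ?_
          intro i _ hi
          simp only [Finset.mem_insert, Finset.mem_singleton, not_or] at hi
          simp [hi.1, hi.2, hw]
        rw [← hsub, Finset.prod_pair hne]
        simp [hne, hne.symm]

def wB (p : ℝ) : Bool → ℝ := fun b => if b then p else 1 - p

lemma wB_sum (p : ℝ) : ∑ b, wB p b = 1 := by
  simp [wB]

lemma row_sum_one {n : ℕ} (p : ℝ) : ∑ r : Fin n → Bool, ∏ j, wB p (r j) = 1 := by
  rw [sum_prod_pi (fun _ b => wB p b)]
  have h2 : wB p true + wB p false = 1 := by simp [wB]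
  simp [h2]

lemma row_moment1 {n : ℕ} (p : ℝ) (c : Fin n → ℝ) :
    ∑ r : Fin n → Bool, (∏ j, wB p (r j)) * (∑ j, if r j then c j else 0)
      = p * ∑ j, c j := by
  have step : ∀ r : Fin n → Bool,
      (∏ j, wB p (r j)) * (∑ j, if r j then c j else 0)
      = ∑ j, (∏ j', wB p (r j')) * (if r j then c j else 0) :=
    fun r => Finset.mul_sum _ _ _
  rw [Finset.sum_congr rfl fun r _ => step r, Finset.sum_comm]
  rw [Finset.sum_congr rfl fun j _ =>
    exp_single (wB p) (wB_sum p) j (fun b => if b then c j else 0)]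
  simp [wB, Finset.mul_sum]

lemma row_moment2 {n : ℕ} (p : ℝ) (c : Fin n → ℝ) :
    ∑ r : Fin n → Bool, (∏ j, wB p (r j)) * (∑ j, if r j then c j else 0) ^ 2
      = p ^ 2 * (∑ j, c j) ^ 2 + (p - p ^ 2) * ∑ j, (c j) ^ 2 := by
  have expand : ∀ r : Fin n → Bool, (∑ j, if r j then c j else 0) ^ 2
      = ∑ j, ∑ k, (if r j then c j else 0) * (if r k then c k else 0) := by
    intro r; rw [sq, Finset.sum_mul_sum]
  have step : ∀ r : Fin n → Bool,
      (∏ j, wB p (r j)) * (∑ j, if r j then c j else 0) ^ 2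
      = ∑ j, ∑ k, (∏ j', wB p (r j')) *
          ((if r j then c j else 0) * (if r k then c k else 0)) := by
    intro r; rw [expand r, Finset.mul_sum]
    exact Finset.sum_congr rfl fun j _ => Finset.mul_sum _ _ _
  rw [Finset.sum_congr rfl fun r _ => step r, Finset.sum_comm]
  have inner : ∀ j : Fin n, ∑ r : Fin n → Bool, ∑ k, (∏ j', wB p (r j')) *
      ((if r j then c j else 0) * (if r k then c k else 0))
      = ∑ k, ∑ r : Fin n → Bool, (∏ j', wB p (r j')) *
          ((if r j then c j else 0) * (if r k then c k else 0)) :=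
    fun j => Finset.sum_comm
  rw [Finset.sum_congr rfl fun j _ => inner j]
  have per : ∀ j k : Fin n, (∑ r : Fin n → Bool, (∏ j', wB p (r j')) *
      ((if r j then c j else 0) * (if r k then c k else 0)))
      = if j = k then p * c j ^ 2 else (p * c j) * (p * c k) := by
    intro j k
    by_cases hjk : j = k
    · subst hjk
      rw [if_pos rfl,
        exp_single (wB p) (wB_sum p) j
          (fun b => (if b then c j else 0) * (if b then c j else 0))]
      rw [Fintype.sum_bool]
      simp only [wB, Bool.false_eq_true, if_true, if_false, ite_true, ite_false]
      ring
    · rw [if_neg hjk,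
        exp_pair (wB p) (wB_sum p) hjk
          (fun b => if b then c j else 0) (fun b => if b then c k else 0)]
      rw [Fintype.sum_bool, Fintype.sum_bool]
      simp only [wB, Bool.false_eq_true, if_true, if_false, ite_true, ite_false]
      ring
  rw [Finset.sum_congr rfl fun j _ => Finset.sum_congr rfl fun k _ => per j k]
  have split : ∀ j k : Fin n, (if j = k then p * c j ^ 2 else (p * c j) * (p * c k))
      = p ^ 2 * (c j * c k) + (if k = j then p * c j ^ 2 - p ^ 2 * (c j * c j) else 0) := by
    intro j k
    by_cases h : j = k
    · subst h; simp only [eq_self_iff_true, if_true]; ring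
    · simp [h, Ne.symm h]; ring
  rw [Finset.sum_congr rfl fun j _ => Finset.sum_congr rfl fun k _ => split j k]
  rw [Finset.sum_congr rfl fun j _ => Finset.sum_add_distrib, Finset.sum_add_distrib]
  have h1 : ∑ j : Fin n, ∑ k : Fin n, p ^ 2 * (c j * c k)
      = p ^ 2 * ((∑ j, c j) * (∑ j, c j)) := by
    rw [Finset.sum_mul_sum, Finset.mul_sum]
    exact Finset.sum_congr rfl fun j _ => by rw [Finset.mul_sum]
  have h2 : ∀ j : Fin n, ∑ k : Fin n,
      (if k = j then p * c j ^ 2 - p ^ 2 * (c j * c j) else 0)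
      = p * c j ^ 2 - p ^ 2 * (c j * c j) := by
    intro j; simp
  rw [h1, Finset.sum_congr rfl fun j _ => h2 j, Finset.sum_sub_distrib,
    ← Finset.mul_sum, ← Finset.mul_sum]
  have h3 : ∑ j, c j * c j = ∑ j, c j ^ 2 :=
    Finset.sum_congr rfl fun j _ => (sq (c j)).symm
  rw [h3]; ring

theorem stmt5 {m n : ℕ} (A : Matrix (Fin m) (Fin n) ℝ) (b : Fin m → ℝ)
    (p q : ℝ) (hp0 : 0 < p) (hp1 : p ≤ 1) (hq0 : 0 < q) (hq1 : q ≤ 1)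
    (x : Fin n → ℝ) :
    ∑ δ : Fin m → Fin n → Bool, ∑ ε : Fin m → Bool,
      (wM p δ * wV q ε) *
        sqnorm ((1 / p ^ 2) • (maskM δ A *ᵥ x) - (1 / (p * q)) • maskV ε b)
      = (1 / p ^ 2) * sqnorm (A *ᵥ x - b)
        + ((1 - q) / (p ^ 2 * q)) * sqnorm b
        + ((1 - p) / p ^ 3) * (x ⬝ᵥ (diagPart (Aᵀ * A) *ᵥ x)) := by
  classical
  have hp : p ≠ 0 := ne_of_gt hp0
  have hq : q ≠ 0 := ne_of_gt hq0
  have hW1 : ∑ r : Fin n → Bool, ∏ j, wB p (r j) = 1 := row_sum_one p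
  have hmask : ∀ (δ : Fin m → Fin n → Bool) (i : Fin m),
      (maskM δ A *ᵥ x) i = ∑ j, (if δ i j then A i j * x j else 0) := by
    intro δ i
    simp [maskM, Matrix.mulVec, dotProduct, ite_mul]
  have hAx : ∀ i, (A *ᵥ x) i = ∑ j, A i j * x j := by
    intro i; simp [Matrix.mulVec, dotProduct]
  -- first moment of the masked matrix-vector product
  have hE1 : ∀ i : Fin m, ∑ δ : Fin m → Fin n → Bool, wM p δ * ((maskM δ A *ᵥ x) i)
      = p * (A *ᵥ x) i := by
    intro i
    calc ∑ δ : Fin m → Fin n → Bool, wM p δ * ((maskM δ A *ᵥ x) i)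
        = ∑ δ : Fin m → Fin n → Bool, (∏ i', ∏ j, wB p (δ i' j)) *
            (∑ j, if δ i j then A i j * x j else 0) := by
          refine Finset.sum_congr rfl fun δ _ => ?_
          rw [hmask δ i]
          simp [wM, wB]
      _ = ∑ b' : Fin n → Bool, (∏ j, wB p (b' j)) *
            (∑ j, if b' j then A i j * x j else 0) :=
          exp_single (ι := Fin m) (κ := Fin n → Bool) (fun r : Fin n → Bool => ∏ j, wB p (r j)) hW1 i
            (fun r : Fin n → Bool => ∑ j, if r j then A i j * x j else 0)
      _ = p * ∑ j, A i j * x j := row_moment1 p (fun j => A i j * x j)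
      _ = p * (A *ᵥ x) i := by rw [hAx i]
  -- second moment of the masked matrix-vector product
  have hE2 : ∀ i : Fin m, ∑ δ : Fin m → Fin n → Bool, wM p δ * ((maskM δ A *ᵥ x) i) ^ 2
      = p ^ 2 * ((A *ᵥ x) i) ^ 2 + (p - p ^ 2) * ∑ j, (A i j * x j) ^ 2 := by
    intro i
    calc ∑ δ : Fin m → Fin n → Bool, wM p δ * ((maskM δ A *ᵥ x) i) ^ 2
        = ∑ δ : Fin m → Fin n → Bool, (∏ i', ∏ j, wB p (δ i' j)) *
            (∑ j, if δ i j then A i j * x j else 0) ^ 2 := by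
          refine Finset.sum_congr rfl fun δ _ => ?_
          rw [hmask δ i]
          simp [wM, wB]
      _ = ∑ b' : Fin n → Bool, (∏ j, wB p (b' j)) *
            (∑ j, if b' j then A i j * x j else 0) ^ 2 :=
          exp_single (ι := Fin m) (κ := Fin n → Bool) (fun r : Fin n → Bool => ∏ j, wB p (r j)) hW1 i
            (fun r : Fin n → Bool => (∑ j, if r j then A i j * x j else 0) ^ 2)
      _ = p ^ 2 * (∑ j, A i j * x j) ^ 2 + (p - p ^ 2) * ∑ j, (A i j * x j) ^ 2 :=
          row_moment2 p (fun j => A i j * x j)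
      _ = p ^ 2 * ((A *ᵥ x) i) ^ 2 + (p - p ^ 2) * ∑ j, (A i j * x j) ^ 2 := by
          rw [hAx i]
  -- total masses
  have hM1 : ∑ δ : Fin m → Fin n → Bool, wM p δ = 1 := by
    calc ∑ δ : Fin m → Fin n → Bool, wM p δ
        = ∑ δ : Fin m → Fin n → Bool, ∏ i, (∏ j, wB p (δ i j)) :=
          Finset.sum_congr rfl fun δ _ => by simp [wM, wB]
      _ = ∏ i : Fin m, ∑ r : Fin n → Bool, ∏ j, wB p (r j) :=
          sum_prod_pi (ι := Fin m) (κ := Fin n → Bool) (fun _ r => ∏ j, wB p (r j))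
      _ = 1 := by simp [hW1]
  have hV1 : ∑ ε : Fin m → Bool, wV q ε = 1 := by
    calc ∑ ε : Fin m → Bool, wV q ε
        = ∑ ε : Fin m → Bool, ∏ i, wB q (ε i) :=
          Finset.sum_congr rfl fun ε _ => by simp [wV, wB]
      _ = ∏ i : Fin m, ∑ b' : Bool, wB q b' := sum_prod_pi (ι := Fin m) (κ := Bool) (fun _ b' => wB q b')
      _ = 1 := by
          have h2 : wB q true + wB q false = 1 := by simp [wB]
          simp [h2]
  -- vector-mask moments
  have hF1 : ∀ i : Fin m, ∑ ε : Fin m → Bool, wV q ε * maskV ε b i = q * b i := by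
    intro i
    calc ∑ ε : Fin m → Bool, wV q ε * maskV ε b i
        = ∑ ε : Fin m → Bool, (∏ i', wB q (ε i')) * (if ε i then b i else 0) :=
          Finset.sum_congr rfl fun ε _ => by simp [wV, wB, maskV]
      _ = ∑ b' : Bool, wB q b' * (if b' then b i else 0) :=
          exp_single (ι := Fin m) (κ := Bool) (wB q) (wB_sum q) i (fun b' => if b' then b i else 0)
      _ = q * b i := by
          rw [Fintype.sum_bool]
          simp only [wB, Bool.false_eq_true, if_true, if_false, ite_true, ite_false]
          ring
  have hF2 : ∀ i : Fin m, ∑ ε : Fin m → Bool, wV q ε * (maskV ε b i) ^ 2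
      = q * (b i) ^ 2 := by
    intro i
    calc ∑ ε : Fin m → Bool, wV q ε * (maskV ε b i) ^ 2
        = ∑ ε : Fin m → Bool, (∏ i', wB q (ε i')) * (if ε i then b i else 0) ^ 2 :=
          Finset.sum_congr rfl fun ε _ => by simp [wV, wB, maskV]
      _ = ∑ b' : Bool, wB q b' * (if b' then b i else 0) ^ 2 :=
          exp_single (ι := Fin m) (κ := Bool) (wB q) (wB_sum q) i (fun b' => (if b' then b i else 0) ^ 2)
      _ = q * (b i) ^ 2 := by
          rw [Fintype.sum_bool]
          simp only [wB, Bool.false_eq_true, if_true, if_false, ite_true, ite_false]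
          ring
  -- product of independent sums
  have prodsum : ∀ (X : (Fin m → Fin n → Bool) → ℝ) (Y : (Fin m → Bool) → ℝ) (k : ℝ),
      ∑ δ : Fin m → Fin n → Bool, ∑ ε : Fin m → Bool, k * (X δ * Y ε)
      = k * ((∑ δ : Fin m → Fin n → Bool, X δ) * (∑ ε : Fin m → Bool, Y ε)) := by
    intro X Y k
    rw [Finset.sum_mul_sum, Finset.mul_sum]
    refine Finset.sum_congr rfl fun δ _ => ?_
    rw [Finset.mul_sum]
  -- the diagonal term
  have hdiag : x ⬝ᵥ (diagPart (Aᵀ * A) *ᵥ x) = ∑ i, ∑ j, (A i j * x j) ^ 2 := by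
    simp only [diagPart, dotProduct, Matrix.mulVec_diagonal, Matrix.mul_apply,
      Matrix.transpose_apply, Finset.sum_mul, Finset.mul_sum]
    rw [Finset.sum_comm]
    exact Finset.sum_congr rfl fun i _ => Finset.sum_congr rfl fun j _ => by ring
  -- unfold sqnorm and pointwise operations
  simp only [sqnorm, Pi.sub_apply, Pi.smul_apply, smul_eq_mul]
  -- push the sum over coordinates outside
  have push : ∑ δ : Fin m → Fin n → Bool, ∑ ε : Fin m → Bool,
      (wM p δ * wV q ε) *
        ∑ i, (1 / p ^ 2 * (maskM δ A *ᵥ x) i - 1 / (p * q) * maskV ε b i) ^ 2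
      = ∑ i, ∑ δ : Fin m → Fin n → Bool, ∑ ε : Fin m → Bool,
          (wM p δ * wV q ε) *
            (1 / p ^ 2 * (maskM δ A *ᵥ x) i - 1 / (p * q) * maskV ε b i) ^ 2 := by
    calc ∑ δ : Fin m → Fin n → Bool, ∑ ε : Fin m → Bool,
        (wM p δ * wV q ε) *
          ∑ i, (1 / p ^ 2 * (maskM δ A *ᵥ x) i - 1 / (p * q) * maskV ε b i) ^ 2
        = ∑ δ : Fin m → Fin n → Bool, ∑ i, ∑ ε : Fin m → Bool,
            (wM p δ * wV q ε) *
              (1 / p ^ 2 * (maskM δ A *ᵥ x) i - 1 / (p * q) * maskV ε b i) ^ 2 := by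
          refine Finset.sum_congr rfl fun δ _ => ?_
          rw [Finset.sum_congr rfl fun ε _ => Finset.mul_sum _ _ _]
          exact Finset.sum_comm
      _ = ∑ i, ∑ δ : Fin m → Fin n → Bool, ∑ ε : Fin m → Bool,
            (wM p δ * wV q ε) *
              (1 / p ^ 2 * (maskM δ A *ᵥ x) i - 1 / (p * q) * maskV ε b i) ^ 2 :=
          Finset.sum_comm
  rw [push]
  -- per-coordinate computation
  have key : ∀ i : Fin m,
      ∑ δ : Fin m → Fin n → Bool, ∑ ε : Fin m → Bool,
        (wM p δ * wV q ε) *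
          (1 / p ^ 2 * (maskM δ A *ᵥ x) i - 1 / (p * q) * maskV ε b i) ^ 2
      = (1 / p ^ 2) ^ 2 *
          ((p ^ 2 * ((A *ᵥ x) i) ^ 2 + (p - p ^ 2) * ∑ j, (A i j * x j) ^ 2) * 1)
        - (2 * (1 / p ^ 2) * (1 / (p * q))) * ((p * (A *ᵥ x) i) * (q * b i))
        + (1 / (p * q)) ^ 2 * (1 * (q * (b i) ^ 2)) := by
    intro i
    have expand : ∀ (δ : Fin m → Fin n → Bool) (ε : Fin m → Bool),
        (wM p δ * wV q ε) *
          (1 / p ^ 2 * (maskM δ A *ᵥ x) i - 1 / (p * q) * maskV ε b i) ^ 2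
        = (1 / p ^ 2) ^ 2 * ((wM p δ * ((maskM δ A *ᵥ x) i) ^ 2) * wV q ε)
          - (2 * (1 / p ^ 2) * (1 / (p * q))) *
              ((wM p δ * ((maskM δ A *ᵥ x) i)) * (wV q ε * maskV ε b i))
          + (1 / (p * q)) ^ 2 * (wM p δ * (wV q ε * (maskV ε b i) ^ 2)) := by
      intro δ ε; ring
    rw [Finset.sum_congr rfl fun δ _ => Finset.sum_congr rfl fun ε _ => expand δ ε]
    rw [Finset.sum_congr rfl fun δ _ => Finset.sum_add_distrib, Finset.sum_add_distrib]
    rw [Finset.sum_congr rfl fun δ _ => Finset.sum_sub_distrib _ _, Finset.sum_sub_distrib]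
    rw [prodsum (fun δ => wM p δ * ((maskM δ A *ᵥ x) i) ^ 2) (fun ε => wV q ε)
      ((1 / p ^ 2) ^ 2)]
    rw [prodsum (fun δ => wM p δ * ((maskM δ A *ᵥ x) i)) (fun ε => wV q ε * maskV ε b i)
      (2 * (1 / p ^ 2) * (1 / (p * q)))]
    rw [prodsum (fun δ => wM p δ) (fun ε => wV q ε * (maskV ε b i) ^ 2)
      ((1 / (p * q)) ^ 2)]
    rw [hE2 i, hE1 i, hV1, hM1, hF1 i, hF2 i]
  rw [Finset.sum_congr rfl fun i _ => key i]
  -- now both sides are explicit; finish coordinatewise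
  rw [hdiag]
  rw [Finset.mul_sum, Finset.mul_sum, Finset.mul_sum]
  rw [← Finset.sum_add_distrib, ← Finset.sum_add_distrib]
  refine Finset.sum_congr rfl fun i _ => ?_
  field_simp
  ring
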